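/- arXiv:1409.4971 — 3 statements merged into one kernel-verified Lean document; each statement's English description precedes it below -/
import Mathlib

section
/- The 2^n-th Walsh–Fejér kernel satisfies: K_{2^n}(x) = 2^{t-1} if x ∈ I_n(e_t) with t < n (i.e. x agrees with e_t in the first n coordinates, where e_t has a 1 only in coordinate t); K_{2^n}(x) = (2^n + 1)/2 if x ∈ I_n; and K_{2^n}(x) = 0 otherwise. -/
open MeasureTheory Filter Topology ENNReal NNReal

noncomputable section

/-- The dyadic group `G = (ℤ/2)^ℕ`. -/
abbrev G : Type := ℕ → ZMod 2

instance : TopologicalSpace (ZMod 2) := ⊥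
instance : DiscreteTopology (ZMod 2) := ⟨rfl⟩
instance : MeasurableSpace G := borel G
instance : BorelSpace G := ⟨rfl⟩

/-- Normalized Haar measure on `G`. -/
def μG : Measure G := Measure.addHaarMeasure ⟨⟨Set.univ, isCompact_univ⟩, by simp⟩

/-- Cylinder `I_n(x) = {y : y_0 = x_0, ..., y_{n-1} = x_{n-1}}`. -/
def cyl (n : ℕ) (x : G) : Set G := {y | ∀ k < n, y k = x k}

/-- `I_n = I_n(0)`. -/
def I₀ (n : ℕ) : Set G := cyl n 0

/-- `e t`: the element of `G` with a single 1 in coordinate `t`. -/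
def e (t : ℕ) : G := fun k => if k = t then 1 else 0

/-- Rademacher functions `r_k(x) = (-1)^{x_k}`. -/
def rade (k : ℕ) (x : G) : ℝ := (-1 : ℝ) ^ (x k).val

/-- Walsh functions `w_n = ∏ r_k^{n_k}` (binary digits `n_k` of `n`). -/
def walsh (n : ℕ) (x : G) : ℝ :=
  ∏ k ∈ Finset.range (n + 1), if n.testBit k then rade k x else 1

/-- Walsh–Dirichlet kernel `D_n = ∑_{k<n} w_k`. -/
def D (n : ℕ) (x : G) : ℝ := ∑ k ∈ Finset.range n, walsh k x

/-- Walsh–Fejér kernel `K_n = (1/n) ∑_{k=1}^n D_k`. -/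
def K (n : ℕ) (x : G) : ℝ := (1 / n) * ∑ k ∈ Finset.Icc 1 n, D k x

/-- Binary variation `V(n) = n_0 + ∑_{k≥1} |n_k - n_{k-1}|`. -/
def V (n : ℕ) : ℕ :=
  (if n.testBit 0 then 1 else 0) +
    ∑ k ∈ Finset.Icc 1 (n + 1), if n.testBit k ≠ n.testBit (k - 1) then 1 else 0

/-- `|n|`: index of the highest nonzero binary digit of `n`. -/
def hi (n : ℕ) : ℕ := Nat.log 2 n

/-- `[n]`: index of the lowest nonzero binary digit of `n`. -/
def lo (n : ℕ) : ℕ := padicValNat 2 n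

/-- `d(n) = |n| - [n]`. -/
def dd (n : ℕ) : ℕ := hi n - lo n

/-- A dyadic martingale: `F n` depends only on the first `n` coordinates, and
`F n` is the average of the two possible extensions, i.e. the martingale property
with respect to the dyadic filtration. -/
def IsDyadicMartingale (F : ℕ → G → ℝ) : Prop :=
  (∀ n x y, (∀ k < n, x k = y k) → F n x = F n y) ∧
  (∀ n x, F n x = (F (n+1) x + F (n+1) (Function.update x n (x n + 1))) / 2)

/-- `k`-th Walsh–Fourier coefficient of a martingale,
`F̂(k) = lim_n ∫ F_n w_k dμ` (the integrals are eventually constant). -/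
def mcoeff (F : ℕ → G → ℝ) (k : ℕ) : ℝ := ∫ x, F (k+1) x * walsh k x ∂μG

/-- Partial sums `S_m F` of the Walsh–Fourier series of a martingale. -/
def S (F : ℕ → G → ℝ) (m : ℕ) (x : G) : ℝ := ∑ j ∈ Finset.range m, mcoeff F j * walsh j x

/-- Fejér means `σ_n F = (1/n) ∑_{k=1}^n S_k F`. -/
def σ (F : ℕ → G → ℝ) (n : ℕ) (x : G) : ℝ := (1 / n) * ∑ k ∈ Finset.Icc 1 n, S F k x

/-- `H_p` quasi-norm of a martingale: `‖sup_n |F_n|‖_{L_p}`. -/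
def HpNorm (p : ℝ) (F : ℕ → G → ℝ) : ℝ≥0∞ :=
  (∫⁻ x, (⨆ n, (‖F n x‖₊ : ℝ≥0∞)) ^ p ∂μG) ^ (1 / p)

/-- Membership in the martingale Hardy space `H_p(G)`. -/
def MemHp (p : ℝ) (F : ℕ → G → ℝ) : Prop := IsDyadicMartingale F ∧ HpNorm p F < ⊤

/-- `L_p` quasi-norm of a function on `G`. -/
def LpN (p : ℝ) (f : G → ℝ) : ℝ≥0∞ := (∫⁻ x, (‖f x‖₊ : ℝ≥0∞) ^ p ∂μG) ^ (1 / p)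

/-- Weak `L_p` quasi-norm: `‖f‖_{L_{p,∞}} = sup_{λ>0} λ μ(|f|>λ)^{1/p}`. -/
def wLp (p : ℝ) (f : G → ℝ) : ℝ≥0∞ :=
  ⨆ t : ℝ≥0, (t : ℝ≥0∞) * (μG {x | (t : ℝ) < |f x|}) ^ (1 / p)

/-- Walsh–Fourier coefficient of an integrable function. -/
def fcoeff (f : G → ℝ) (j : ℕ) : ℝ := ∫ x, f x * walsh j x ∂μG

/-- Partial sums of the Walsh–Fourier series of a function. -/
def Sf (f : G → ℝ) (m : ℕ) (x : G) : ℝ := ∑ j ∈ Finset.range m, fcoeff f j * walsh j x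

/-- Fejér means of the Walsh–Fourier series of a function. -/
def σf (f : G → ℝ) (n : ℕ) (x : G) : ℝ := (1 / n) * ∑ k ∈ Finset.Icc 1 n, Sf f k x

/-- The martingale `(S_{2^m} g)_m` generated by a function `g`; used to interpret the
`H_p` norm of a function such as `σ_n F`. -/
def funMart (g : G → ℝ) : ℕ → G → ℝ := fun m => Sf g (2 ^ m)

/-- Modulus of continuity in `H_p`: `ω_{H_p}(1/2^n, F) = ‖F - S_{2^n} F‖_{H_p}`,
where `F - S_{2^n}F` is the martingale with `m`-th term `F_m - S_{min(2^n, 2^m)}F`. -/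
def ωHp (p : ℝ) (n : ℕ) (F : ℕ → G → ℝ) : ℝ≥0∞ :=
  HpNorm p (fun m x => F m x - S F (min (2 ^ n) (2 ^ m)) x)

/-- The a.e. limit of a martingale (as a limsup, which agrees a.e. with the limit
for martingales in `H_p`). -/
def mLim (F : ℕ → G → ℝ) (x : G) : ℝ := Filter.limsup (fun m => F m x) Filter.atTop

/-- The set `E_l := I_{l+1}(e_{l-1} + e_l)`, with the convention
`I_1(e_{-1}+e_0) = I_2(e_0+e_1)` for `l = 0`. -/
def Eset (l : ℕ) : Set G :=
  if l = 0 then cyl 2 (e 0 + e 1) else cyl (l + 1) (e (l - 1) + e l)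

lemma zmod2_cases (a : ZMod 2) : a = 0 ∨ a = 1 := by revert a; decide

lemma rade_eq (k : ℕ) (x : G) : rade k x = if x k = 0 then 1 else -1 := by
  unfold rade
  rcases zmod2_cases (x k) with h | h <;> rw [h] <;> norm_num [ZMod.val_zero, ZMod.val_one]

lemma walsh_eq_prod (m N : ℕ) (h : m < 2 ^ N) (x : G) :
    walsh m x = ∏ k ∈ Finset.range N, if m.testBit k then rade k x else 1 := by
  unfold walsh
  rcases le_total (m + 1) N with hN | hN
  · apply Finset.prod_subset (Finset.range_subset_range.2 hN)
    intro k hk hk'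
    simp only [Finset.mem_range, not_lt] at hk'
    have : m < 2 ^ k := lt_of_lt_of_le (Nat.lt_two_pow_self (n := m))
      (Nat.pow_le_pow_right (by norm_num) (by omega))
    simp [Nat.testBit_lt_two_pow this]
  · symm
    apply Finset.prod_subset (Finset.range_subset_range.2 hN)
    intro k hk hk'
    simp only [Finset.mem_range, not_lt] at hk'
    have : m < 2 ^ k := lt_of_lt_of_le h (Nat.pow_le_pow_right (by norm_num) hk')
    simp [Nat.testBit_lt_two_pow this]

lemma walsh_two_pow_add (n k : ℕ) (h : k < 2 ^ n) (x : G) :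
    walsh (2 ^ n + k) x = rade n x * walsh k x := by
  have h1 : 2 ^ n + k < 2 ^ (n + 1) := by rw [pow_succ]; omega
  rw [walsh_eq_prod _ (n + 1) h1, walsh_eq_prod k n h, Finset.prod_range_succ]
  rw [Nat.testBit_two_pow_add_eq, Nat.testBit_lt_two_pow h]
  simp only [Bool.not_false, if_true]
  rw [mul_comm]
  congr 1
  apply Finset.prod_congr rfl
  intro j hj
  simp only [Finset.mem_range] at hj
  rw [Nat.testBit_two_pow_add_gt hj]

lemma D_two_pow_add (n k : ℕ) (h : k ≤ 2 ^ n) (x : G) :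
    D (2 ^ n + k) x = D (2 ^ n) x + rade n x * D k x := by
  unfold D
  have hsplit : ∑ j ∈ Finset.range (2 ^ n + k), walsh j x
      = ∑ j ∈ Finset.range (2 ^ n), walsh j x
        + ∑ j ∈ Finset.Ico (2 ^ n) (2 ^ n + k), walsh j x := by
    rw [Finset.range_eq_Ico, Finset.range_eq_Ico]
    exact (Finset.sum_Ico_consecutive (fun j => walsh j x) (Nat.zero_le _) (Nat.le_add_right _ k)).symm
  rw [hsplit]
  congr 1
  rw [Finset.sum_Ico_eq_sum_range]
  simp only [Nat.add_sub_cancel_left]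
  rw [Finset.mul_sum]
  apply Finset.sum_congr rfl
  intro j hj
  simp only [Finset.mem_range] at hj
  exact walsh_two_pow_add n j (by omega) x

lemma mem_I0_iff (n : ℕ) (x : G) : x ∈ I₀ n ↔ ∀ k < n, x k = 0 := by
  simp [I₀, cyl, Set.mem_setOf_eq, Pi.zero_apply]

open scoped Classical in
lemma D_two_pow (n : ℕ) (x : G) :
    D (2 ^ n) x = if x ∈ I₀ n then (2 : ℝ) ^ n else 0 := by
  induction n with
  | zero =>
    rw [if_pos (by rw [mem_I0_iff]; omega)]
    simp [D, walsh, Nat.zero_testBit]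
  | succ n ih =>
    have h2 : (2 : ℕ) ^ (n + 1) = 2 ^ n + 2 ^ n := by rw [pow_succ]; omega
    rw [h2, D_two_pow_add n (2 ^ n) le_rfl x, ih]
    by_cases hI : x ∈ I₀ (n + 1)
    · have hxn : x n = 0 := (mem_I0_iff _ _).1 hI n (by omega)
      have hIn : x ∈ I₀ n := by rw [mem_I0_iff]; intro k hk; exact (mem_I0_iff _ _).1 hI k (by omega)
      rw [if_pos hI, if_pos hIn, rade_eq, if_pos hxn, pow_succ]; ring
    · rw [if_neg hI]
      by_cases hIn : x ∈ I₀ n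
      · have hxn : x n = 1 := by
          rcases zmod2_cases (x n) with h | h
          · exfalso; apply hI; rw [mem_I0_iff]; intro k hk
            rcases Nat.lt_succ_iff_lt_or_eq.1 hk with hk' | hk'
            · exact (mem_I0_iff _ _).1 hIn k hk'
            · rw [hk']; exact h
          · exact h
        rw [if_pos hIn, rade_eq, if_neg (by rw [hxn]; decide)]; ring
      · rw [if_neg hIn]; ring

def Asum (n : ℕ) (x : G) : ℝ := ∑ k ∈ Finset.Icc 1 (2 ^ n), D k x

lemma Asum_succ (n : ℕ) (x : G) :
    Asum (n + 1) x = (1 + rade n x) * Asum n x + (2 : ℝ) ^ n * D (2 ^ n) x := by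
  unfold Asum
  have hIcc : ∀ m : ℕ, Finset.Icc 1 m = Finset.Ioc 0 m := by
    intro m; rfl
  rw [hIcc, hIcc]
  have h2 : (2 : ℕ) ^ (n + 1) = 2 ^ n + 2 ^ n := by rw [pow_succ]; omega
  rw [h2, ← Finset.sum_Ioc_consecutive _ (Nat.zero_le _) (Nat.le_add_right _ _)]
  have hmap : Finset.Ioc (2 ^ n) (2 ^ n + 2 ^ n) =
      Finset.map (addLeftEmbedding (2 ^ n)) (Finset.Ioc 0 (2 ^ n)) := by
    rw [Finset.map_add_left_Ioc]; simp
  rw [hmap, Finset.sum_map]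
  have : ∀ j ∈ Finset.Ioc 0 (2 ^ n), D (addLeftEmbedding (2 ^ n) j) x
      = D (2 ^ n) x + rade n x * D j x := by
    intro j hj
    simp only [Finset.mem_Ioc] at hj
    exact D_two_pow_add n j hj.2 x
  rw [Finset.sum_congr rfl this, Finset.sum_add_distrib, ← Finset.mul_sum,
    Finset.sum_const, Nat.card_Ioc]
  simp only [Nat.sub_zero, nsmul_eq_mul]
  push_cast
  ring

lemma mem_cyl_e_iff (n t : ℕ) (x : G) :
    x ∈ cyl n (e t) ↔ ∀ k < n, x k = if k = t then 1 else 0 := by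
  simp [cyl, e, Set.mem_setOf_eq]

open scoped Classical in
lemma Asum_spec (n : ℕ) (x : G) :
    (∀ t, t < n → x ∈ cyl n (e t) → Asum n x = (2 : ℝ) ^ n * 2 ^ t / 2) ∧
    (x ∈ I₀ n → Asum n x = (2 : ℝ) ^ n * ((2 : ℝ) ^ n + 1) / 2) ∧
    (x ∉ I₀ n → (∀ t, t < n → x ∉ cyl n (e t)) → Asum n x = 0) := by
  induction n with
  | zero =>
    have hA : Asum 0 x = 1 := by
      simp [Asum, D, walsh, Nat.zero_testBit]
    refine ⟨fun t ht => by omega, fun _ => by rw [hA]; norm_num, fun h _ => ?_⟩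
    exact absurd ((mem_I0_iff 0 x).2 (by omega)) h
  | succ n ih =>
    obtain ⟨ih1, ih2, ih3⟩ := ih
    refine ⟨?_, ?_, ?_⟩
    · intro t ht hx
      rw [Asum_succ, D_two_pow]
      rw [mem_cyl_e_iff] at hx
      rcases Nat.lt_succ_iff_lt_or_eq.1 ht with ht' | ht'
      · -- t < n
        have hxc : x ∈ cyl n (e t) := (mem_cyl_e_iff n t x).2 fun k hk => hx k (by omega)
        have hxn : x n = 0 := by
          have := hx n (by omega); rwa [if_neg (by omega)] at this
        have hIn : x ∉ I₀ n := by
          rw [mem_I0_iff]; push_neg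
          exact ⟨t, ht', by rw [hx t (by omega), if_pos rfl]; decide⟩
        rw [ih1 t ht' hxc, rade_eq, if_pos hxn, if_neg hIn, pow_succ]
        ring
      · -- t = n
        have hIn : x ∈ I₀ n := by
          rw [mem_I0_iff]; intro k hk
          rw [hx k (by omega), if_neg (by omega)]
        have hxn : x n = 1 := by
          have := hx n (by omega); rwa [if_pos (by omega)] at this
        rw [ih2 hIn, rade_eq, if_neg (by rw [hxn]; decide), if_pos hIn, ht', pow_succ]
        ring
    · intro hx
      rw [Asum_succ, D_two_pow]
      have hIn : x ∈ I₀ n := by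
        rw [mem_I0_iff]; intro k hk; exact (mem_I0_iff _ _).1 hx k (by omega)
      have hxn : x n = 0 := (mem_I0_iff _ _).1 hx n (by omega)
      rw [ih2 hIn, rade_eq, if_pos hxn, if_pos hIn, pow_succ]
      ring
    · intro hI hcyl
      rw [Asum_succ, D_two_pow]
      by_cases hIn : x ∈ I₀ n
      · exfalso
        have hxn : x n = 1 := by
          rcases zmod2_cases (x n) with h | h
          · exfalso; apply hI; rw [mem_I0_iff]; intro k hk
            rcases Nat.lt_succ_iff_lt_or_eq.1 hk with hk' | hk'
            · exact (mem_I0_iff _ _).1 hIn k hk'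
            · rw [hk']; exact h
          · exact h
        apply hcyl n (by omega)
        rw [mem_cyl_e_iff]
        intro k hk
        rcases Nat.lt_succ_iff_lt_or_eq.1 hk with hk' | hk'
        · rw [if_neg (by omega)]; exact (mem_I0_iff _ _).1 hIn k hk'
        · rw [hk', if_pos rfl]; exact hxn
      · rw [if_neg hIn]
        by_cases hex : ∃ t, t < n ∧ x ∈ cyl n (e t)
        · obtain ⟨t, ht, hxt⟩ := hex
          have hxn : x n = 1 := by
            rcases zmod2_cases (x n) with h | h
            · exfalso
              apply hcyl t (by omega)
              rw [mem_cyl_e_iff]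
              intro k hk
              rcases Nat.lt_succ_iff_lt_or_eq.1 hk with hk' | hk'
              · exact (mem_cyl_e_iff n t x).1 hxt k hk'
              · rw [hk', if_neg (by omega)]; exact h
            · exact h
          rw [rade_eq, if_neg (by rw [hxn]; decide)]
          ring
        · push_neg at hex
          rw [ih3 hIn (fun t ht => hex t ht)]
          ring


/-- values of the Fejér kernel `K_{2^n}`. -/
theorem fejer_pow_two (n : ℕ) (x : G) :
    (∀ t, t < n → x ∈ cyl n (e t) → K (2 ^ n) x = (2 : ℝ) ^ t / 2) ∧
    (x ∈ I₀ n → K (2 ^ n) x = ((2 : ℝ) ^ n + 1) / 2) ∧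
    (x ∉ I₀ n → (∀ t, t < n → x ∉ cyl n (e t)) → K (2 ^ n) x = 0) := by
  obtain ⟨h1, h2, h3⟩ := Asum_spec n x
  have hK : K (2 ^ n) x = (1 / (2 : ℝ) ^ n) * Asum n x := by
    unfold K Asum
    push_cast
    ring
  have h2n : (2 : ℝ) ^ n ≠ 0 := by positivity
  refine ⟨fun t ht hx => ?_, fun hx => ?_, fun hI hc => ?_⟩
  · rw [hK, h1 t ht hx]; field_simp
  · rw [hK, h2 hx]; field_simp
  · rw [hK, h3 hI hc]; ring
end
end

section
/- For n ≥ 2^M, for x ∈ I_{l+1}(e_k + e_l) with 0 ≤ k < l < M, the Walsh–Fejér kernel satisfies ∫_{I_M} |K_n(x+t)| dμ(t) ≤ c 2^{k+l−2M} for an absolute constant c. -/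
open MeasureTheory Filter Topology ENNReal NNReal

noncomputable section

/-! ### Auxiliary lemmas for the Fejér kernel estimate -/

section FejerAux

lemma rade_of_zero {y : G} {k : ℕ} (h : y k = 0) : rade k y = 1 := by
  simp [rade, h]

lemma rade_of_one {y : G} {k : ℕ} (h : y k = 1) : rade k y = -1 := by
  have hv : (1 : ZMod 2).val = 1 := rfl
  simp [rade, h, hv]

lemma rade_cases (k : ℕ) (y : G) : rade k y = 1 ∨ rade k y = -1 := by
  rcases zmod2_cases (y k) with h | h
  · exact Or.inl (rade_of_zero h)
  · exact Or.inr (rade_of_one h)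

lemma abs_rade (k : ℕ) (y : G) : |rade k y| = 1 := by
  rcases rade_cases k y with h | h <;> rw [h] <;> norm_num

lemma one_add_rade_nonneg (k : ℕ) (y : G) : 0 ≤ 1 + rade k y := by
  rcases rade_cases k y with h | h <;> rw [h] <;> norm_num

lemma one_add_rade_le_two (k : ℕ) (y : G) : 1 + rade k y ≤ 2 := by
  rcases rade_cases k y with h | h <;> rw [h] <;> norm_num

lemma walsh_eq_prod_s9 {n B : ℕ} (hB : n < 2 ^ B) (y : G) :
    walsh n y = ∏ i ∈ Finset.range B, (if n.testBit i then rade i y else 1) := by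
  unfold walsh
  rcases le_total (n + 1) B with h | h
  · refine Finset.prod_subset (Finset.range_subset_range.2 h) fun i hi hni => ?_
    have hni' : n + 1 ≤ i := by
      by_contra hc
      exact hni (Finset.mem_range.2 (by omega))
    have hlt : n < 2 ^ i := by
      calc n < 2 ^ n := Nat.lt_pow_self (by norm_num)
        _ ≤ 2 ^ i := Nat.pow_le_pow_right (by norm_num) (by omega)
    simp [Nat.testBit_lt_two_pow hlt]
  · refine (Finset.prod_subset (Finset.range_subset_range.2 h) fun i hi hni => ?_).symm
    have hni' : B ≤ i := by
      by_contra hc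
      exact hni (Finset.mem_range.2 (by omega))
    have hlt : n < 2 ^ i := lt_of_lt_of_le hB (Nat.pow_le_pow_right (by norm_num) hni')
    simp [Nat.testBit_lt_two_pow hlt]

lemma walsh_two_pow_add_s9 {A j : ℕ} (hj : j < 2 ^ A) (y : G) :
    walsh (2 ^ A + j) y = rade A y * walsh j y := by
  have h1 : 2 ^ A + j < 2 ^ (A + 1) := by
    have : (2 : ℕ) ^ (A + 1) = 2 ^ A + 2 ^ A := by rw [pow_succ]; omega
    omega
  rw [walsh_eq_prod_s9 h1 y, walsh_eq_prod_s9 (show j < 2 ^ A from hj) y, Finset.prod_range_succ]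
  have ht : (2 ^ A + j).testBit A = true := by
    rw [Nat.testBit_two_pow_add_eq, Nat.testBit_lt_two_pow hj]
    rfl
  rw [ht]
  simp only [if_true]
  rw [mul_comm]
  congr 1
  refine Finset.prod_congr rfl fun i hi => ?_
  rw [Nat.testBit_two_pow_add_gt (Finset.mem_range.1 hi) j]

lemma D_two_pow_s9 (i : ℕ) (y : G) :
    D (2 ^ i) y = if ∀ j < i, y j = 0 then ((2 : ℝ) ^ i) else 0 := by
  induction i with
  | zero =>
    simp [D, walsh]
  | succ i ih =>
    have hsplit : D (2 ^ (i + 1)) y = (1 + rade i y) * D (2 ^ i) y := by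
      have h2 : (2 : ℕ) ^ (i + 1) = 2 ^ i + 2 ^ i := by rw [pow_succ]; omega
      simp only [D, h2, Finset.sum_range_add]
      rw [Finset.sum_congr rfl fun j hj => walsh_two_pow_add_s9 (Finset.mem_range.1 hj) y,
        ← Finset.mul_sum]
      ring
    rw [hsplit, ih]
    rcases zmod2_cases (y i) with h | h
    · rw [rade_of_zero h]
      by_cases hb : ∀ j < i, y j = 0
      · have hb' : ∀ j < i + 1, y j = 0 := by
          intro j hj
          rcases (by omega : j < i ∨ j = i) with h' | h'
          · exact hb j h'
          · rw [h']; exact h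
        rw [if_pos hb, if_pos hb', pow_succ]
        ring
      · have hb' : ¬ ∀ j < i + 1, y j = 0 := fun hh => hb fun j hj => hh j (by omega)
        rw [if_neg hb, if_neg hb']
        ring
    · rw [rade_of_one h]
      have hb' : ¬ ∀ j < i + 1, y j = 0 := by
        intro hh
        have := hh i (by omega)
        rw [h] at this
        exact (by decide : (1 : ZMod 2) ≠ 0) this
      rw [if_neg hb']
      ring

lemma D_two_pow_nonneg (i : ℕ) (y : G) : 0 ≤ D (2 ^ i) y := by
  rw [D_two_pow_s9]; split <;> positivity

lemma D_two_pow_le (i : ℕ) (y : G) : D (2 ^ i) y ≤ 2 ^ i := by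
  rw [D_two_pow_s9]; split
  · exact le_refl _
  · positivity

lemma D_two_pow_eq_zero {k i : ℕ} {y : G} (hk : k < i) (h : y k = 1) : D (2 ^ i) y = 0 := by
  rw [D_two_pow_s9, if_neg]
  intro hh
  have := hh k hk
  rw [h] at this
  exact (by decide : (1 : ZMod 2) ≠ 0) this

/-- Partial sums of Dirichlet kernels: `DS n = ∑_{j=1}^n D_j`, so that `K n = DS n / n`. -/
def DS (n : ℕ) (y : G) : ℝ := ∑ j ∈ Finset.Icc 1 n, D j y

lemma DS_zero (y : G) : DS 0 y = 0 := by simp [DS]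

lemma DS_one (y : G) : DS (2 ^ 0) y = 1 := by
  simp [DS, D, walsh]

lemma D_add {A j : ℕ} (hj : j ≤ 2 ^ A) (y : G) :
    D (2 ^ A + j) y = D (2 ^ A) y + rade A y * D j y := by
  simp only [D, Finset.sum_range_add]
  rw [Finset.sum_congr rfl fun i hi =>
      walsh_two_pow_add_s9 (lt_of_lt_of_le (Finset.mem_range.1 hi) hj) y, ← Finset.mul_sum]

lemma DS_eq_Ioc (n : ℕ) (y : G) : DS n y = ∑ j ∈ Finset.Ioc 0 n, D j y := by
  rw [DS, show (1 : ℕ) = 0 + 1 from rfl, Finset.Icc_add_one_left_eq_Ioc]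

lemma DS_rec {A m : ℕ} (hm : m ≤ 2 ^ A) (y : G) :
    DS (2 ^ A + m) y = DS (2 ^ A) y + m * D (2 ^ A) y + rade A y * DS m y := by
  rw [DS_eq_Ioc, DS_eq_Ioc, DS_eq_Ioc]
  rw [← Finset.sum_Ioc_consecutive _ (Nat.zero_le (2 ^ A)) (Nat.le_add_right (2 ^ A) m)]
  have hmap : Finset.Ioc (2 ^ A) (2 ^ A + m)
      = (Finset.Ioc 0 m).map (addLeftEmbedding (2 ^ A)) := by
    rw [Finset.map_add_left_Ioc]
    simp
  rw [hmap, Finset.sum_map]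
  simp only [addLeftEmbedding_apply]
  rw [Finset.sum_congr rfl fun j hj => D_add (le_trans (Finset.mem_Ioc.1 hj).2 hm) y]
  rw [Finset.sum_add_distrib, Finset.sum_const, ← Finset.mul_sum, Nat.card_Ioc]
  simp only [Nat.sub_zero, nsmul_eq_mul]
  ring

lemma DS_two_pow_succ (i : ℕ) (y : G) :
    DS (2 ^ (i + 1)) y = (1 + rade i y) * DS (2 ^ i) y + 2 ^ i * D (2 ^ i) y := by
  have h2 : (2 : ℕ) ^ (i + 1) = 2 ^ i + 2 ^ i := by rw [pow_succ]; omega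
  rw [h2, DS_rec (le_refl _) y]
  push_cast
  ring

lemma DS_two_pow_bounds (i : ℕ) (y : G) : 0 ≤ DS (2 ^ i) y ∧ DS (2 ^ i) y ≤ 4 ^ i := by
  induction i with
  | zero => rw [DS_one]; norm_num
  | succ i ih =>
    obtain ⟨h0, h1⟩ := ih
    have hr0 := one_add_rade_nonneg i y
    have hr2 := one_add_rade_le_two i y
    have hd0 := D_two_pow_nonneg i y
    have hd1 := D_two_pow_le i y
    have h4 : (2 : ℝ) ^ i * 2 ^ i = 4 ^ i := by
      rw [← mul_pow]; norm_num
    rw [DS_two_pow_succ]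
    constructor
    · exact add_nonneg (mul_nonneg hr0 h0) (mul_nonneg (by positivity) hd0)
    · have hb1 : (1 + rade i y) * DS (2 ^ i) y ≤ 2 * 4 ^ i :=
        mul_le_mul hr2 h1 h0 (by norm_num)
      have hb2 : (2 : ℝ) ^ i * D (2 ^ i) y ≤ 2 ^ i * 2 ^ i :=
        mul_le_mul_of_nonneg_left hd1 (by positivity)
      have hp : (4 : ℝ) ^ (i + 1) = 4 * 4 ^ i := by rw [pow_succ]; ring
      rw [hp]
      rw [h4] at hb2
      linarith

lemma DS_two_pow_le_of_one {k : ℕ} {y : G} (h : y k = 1) :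
    ∀ i, k < i → DS (2 ^ i) y ≤ 2 ^ (i + k) := by
  intro i hi
  induction i, hi using Nat.le_induction with
  | base =>
    rw [DS_two_pow_succ, rade_of_one h]
    have hd1 := D_two_pow_le k y
    have hd : (2 : ℝ) ^ k * D (2 ^ k) y ≤ 2 ^ k * 2 ^ k :=
      mul_le_mul_of_nonneg_left hd1 (by positivity)
    have hpow : (2 : ℝ) ^ k * 2 ^ k ≤ 2 ^ (k + 1 + k) := by
      rw [← pow_add]
      apply pow_le_pow_right₀ (by norm_num)
      omega
    calc (1 + -1) * DS (2 ^ k) y + 2 ^ k * D (2 ^ k) y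
        = 2 ^ k * D (2 ^ k) y := by ring
      _ ≤ 2 ^ k * 2 ^ k := hd
      _ ≤ 2 ^ (k + 1 + k) := hpow
  | succ i hik ih =>
    rw [DS_two_pow_succ, D_two_pow_eq_zero (show k < i by omega) h, mul_zero, add_zero]
    have h0 := (DS_two_pow_bounds i y).1
    have hr2 := one_add_rade_le_two i y
    have hr0 := one_add_rade_nonneg i y
    calc (1 + rade i y) * DS (2 ^ i) y ≤ 2 * DS (2 ^ i) y :=
          mul_le_mul_of_nonneg_right hr2 h0
      _ ≤ 2 * 2 ^ (i + k) := by linarith [ih]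
      _ = 2 ^ (i + 1 + k) := by rw [show i + 1 + k = (i + k) + 1 by omega, pow_succ]; ring

lemma DS_two_pow_eq_zero {k l : ℕ} {y : G} (hkl : k < l) (hk : y k = 1) (hl : y l = 1) :
    ∀ i, l < i → DS (2 ^ i) y = 0 := by
  intro i hi
  induction i, hi using Nat.le_induction with
  | base =>
    rw [DS_two_pow_succ, rade_of_one hl, D_two_pow_eq_zero hkl hk, mul_zero, add_zero]
    ring
  | succ i hil ih =>
    rw [DS_two_pow_succ, ih, D_two_pow_eq_zero (show k < i by omega) hk]
    ring

lemma abs_DS_le (y : G) : ∀ B, ∀ n < 2 ^ B,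
    |DS n y| ≤ ∑ i ∈ Finset.range B, (DS (2 ^ i) y + 2 ^ i * D (2 ^ i) y) := by
  intro B
  induction B with
  | zero =>
    intro n hn
    have : n = 0 := by omega
    subst this
    simp [DS_zero]
  | succ B ih =>
    intro n hn
    have hterm : 0 ≤ DS (2 ^ B) y + 2 ^ B * D (2 ^ B) y :=
      add_nonneg (DS_two_pow_bounds B y).1 (mul_nonneg (by positivity) (D_two_pow_nonneg B y))
    rcases lt_or_ge n (2 ^ B) with h | h
    · calc |DS n y| ≤ ∑ i ∈ Finset.range B, (DS (2 ^ i) y + 2 ^ i * D (2 ^ i) y) := ih n h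
        _ ≤ _ := by rw [Finset.sum_range_succ]; linarith
    · have h2B : (2 : ℕ) ^ (B + 1) = 2 ^ B + 2 ^ B := by rw [pow_succ]; omega
      have hm : n - 2 ^ B < 2 ^ B := by omega
      have hn' : n = 2 ^ B + (n - 2 ^ B) := by omega
      set m := n - 2 ^ B with hmdef
      rw [hn', DS_rec (le_of_lt hm) y]
      have hDS0 := (DS_two_pow_bounds B y).1
      have hD0 := D_two_pow_nonneg B y
      have hDle := D_two_pow_le B y
      have hmc : (m : ℝ) ≤ 2 ^ B := by
        have : (m : ℝ) ≤ ((2 : ℕ) ^ B : ℝ) := by exact_mod_cast le_of_lt hm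
        simpa using this
      have hb : (m : ℝ) * D (2 ^ B) y ≤ 2 ^ B * D (2 ^ B) y :=
        mul_le_mul_of_nonneg_right hmc hD0
      have ha : |rade B y * DS m y| = |DS m y| := by
        rw [abs_mul, abs_rade, one_mul]
      have h1 : |DS (2 ^ B) y + m * D (2 ^ B) y + rade B y * DS m y|
          ≤ (DS (2 ^ B) y + 2 ^ B * D (2 ^ B) y) + |DS m y| := by
        calc |DS (2 ^ B) y + m * D (2 ^ B) y + rade B y * DS m y|
            ≤ |DS (2 ^ B) y + m * D (2 ^ B) y| + |rade B y * DS m y| := abs_add_le _ _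
          _ = (DS (2 ^ B) y + m * D (2 ^ B) y) + |DS m y| := by
              rw [ha, abs_of_nonneg (add_nonneg hDS0 (mul_nonneg (by positivity) hD0))]
          _ ≤ (DS (2 ^ B) y + 2 ^ B * D (2 ^ B) y) + |DS m y| := by linarith
      calc |DS (2 ^ B) y + m * D (2 ^ B) y + rade B y * DS m y|
          ≤ (DS (2 ^ B) y + 2 ^ B * D (2 ^ B) y) + |DS m y| := h1
        _ ≤ (DS (2 ^ B) y + 2 ^ B * D (2 ^ B) y)
            + ∑ i ∈ Finset.range B, (DS (2 ^ i) y + 2 ^ i * D (2 ^ i) y) := by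
              linarith [ih m hm]
        _ = _ := by rw [Finset.sum_range_succ]; ring

lemma abs_DS_coset {k l : ℕ} {y : G} (hkl : k < l) (hk : y k = 1) (hl : y l = 1)
    (n B : ℕ) (hn : n < 2 ^ B) : |DS n y| ≤ 2 ^ (k + l + 2) := by
  refine le_trans (abs_DS_le y B n hn) ?_
  have hterm : ∀ i ∈ Finset.range B, DS (2 ^ i) y + 2 ^ i * D (2 ^ i) y ≤
      (if i ≤ k then (2 : ℝ) * 4 ^ i else 0) + (if k < i ∧ i ≤ l then (2 : ℝ) ^ (i + k) else 0) := by
    intro i _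
    rcases le_or_gt i k with h1 | h1
    · rw [if_pos h1, if_neg (by omega), add_zero]
      have hDS := (DS_two_pow_bounds i y).2
      have hD := D_two_pow_le i y
      have h4 : (2 : ℝ) ^ i * 2 ^ i = 4 ^ i := by rw [← mul_pow]; norm_num
      have hb : (2 : ℝ) ^ i * D (2 ^ i) y ≤ 2 ^ i * 2 ^ i :=
        mul_le_mul_of_nonneg_left hD (by positivity)
      rw [h4] at hb
      linarith
    · rcases le_or_gt i l with h2 | h2
      · rw [if_neg (by omega), if_pos ⟨h1, h2⟩, zero_add]
        rw [D_two_pow_eq_zero h1 hk, mul_zero, add_zero]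
        exact DS_two_pow_le_of_one hk i h1
      · rw [if_neg (by omega), if_neg (by omega), add_zero]
        rw [D_two_pow_eq_zero (show k < i by omega) hk, DS_two_pow_eq_zero hkl hk hl i h2,
          mul_zero, add_zero]
  refine le_trans (Finset.sum_le_sum hterm) ?_
  rw [Finset.sum_add_distrib]
  have hA : ∑ i ∈ Finset.range B, (if i ≤ k then (2 : ℝ) * 4 ^ i else 0) ≤ 2 ^ (k + l + 1) := by
    have he : ∑ i ∈ Finset.range B, (if i ≤ k then (2 : ℝ) * 4 ^ i else 0)
        = ∑ i ∈ (Finset.range B).filter (· ≤ k), (2 : ℝ) * 4 ^ i := (Finset.sum_filter _ _).symm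
    rw [he]
    have hsub : (Finset.range B).filter (· ≤ k) ⊆ Finset.range (k + 1) := by
      intro i hi
      rw [Finset.mem_filter] at hi
      exact Finset.mem_range.2 (by omega)
    refine le_trans
      (Finset.sum_le_sum_of_subset_of_nonneg hsub fun i _ _ => by positivity) ?_
    rw [← Finset.mul_sum, geom_sum_eq (by norm_num : (4 : ℝ) ≠ 1)]
    have h4 : (4 : ℝ) ^ (k + 1) = 2 ^ (2 * k + 2) := by
      rw [show (4 : ℝ) = 2 ^ 2 by norm_num, ← pow_mul]
      ring_nf
    have hle : (2 : ℝ) ^ (2 * k + 2) ≤ 2 ^ (k + l + 1) :=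
      pow_le_pow_right₀ (by norm_num) (by omega)
    have h40 : (0 : ℝ) ≤ 4 ^ (k + 1) := by positivity
    have : (2 : ℝ) * ((4 ^ (k + 1) - 1) / (4 - 1)) ≤ 4 ^ (k + 1) := by linarith
    rw [h4] at this
    linarith
  have hB2 : ∑ i ∈ Finset.range B, (if k < i ∧ i ≤ l then (2 : ℝ) ^ (i + k) else 0)
      ≤ 2 ^ (k + l + 1) := by
    have he : ∑ i ∈ Finset.range B, (if k < i ∧ i ≤ l then (2 : ℝ) ^ (i + k) else 0)
        = ∑ i ∈ (Finset.range B).filter (fun i => k < i ∧ i ≤ l), (2 : ℝ) ^ (i + k) :=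
      (Finset.sum_filter _ _).symm
    rw [he]
    have hsub : (Finset.range B).filter (fun i => k < i ∧ i ≤ l) ⊆ Finset.range (l + 1) := by
      intro i hi
      rw [Finset.mem_filter] at hi
      exact Finset.mem_range.2 (by omega)
    refine le_trans
      (Finset.sum_le_sum_of_subset_of_nonneg hsub fun i _ _ => by positivity) ?_
    have he2 : ∀ i ∈ Finset.range (l + 1), (2 : ℝ) ^ (i + k) = 2 ^ i * 2 ^ k := fun i _ => by
      rw [pow_add]
    rw [Finset.sum_congr rfl he2, ← Finset.sum_mul, geom_sum_eq (by norm_num : (2 : ℝ) ≠ 1)]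
    have h20 : (0 : ℝ) < 2 ^ k := by positivity
    have hpow : (2 : ℝ) ^ (l + 1) * 2 ^ k = 2 ^ (k + l + 1) := by
      rw [← pow_add]; ring_nf
    calc ((2 : ℝ) ^ (l + 1) - 1) / (2 - 1) * 2 ^ k ≤ 2 ^ (l + 1) * 2 ^ k := by
          have : ((2 : ℝ) ^ (l + 1) - 1) / (2 - 1) ≤ 2 ^ (l + 1) := by norm_num
          exact mul_le_mul_of_nonneg_right this (le_of_lt h20)
      _ = 2 ^ (k + l + 1) := hpow
  have hfin : (2 : ℝ) ^ (k + l + 1) + 2 ^ (k + l + 1) = 2 ^ (k + l + 2) := by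
    rw [show k + l + 2 = (k + l + 1) + 1 by omega, pow_succ]
    ring
  linarith

lemma abs_K_le {k l M n : ℕ} {y : G} (hkl : k < l) (hk : y k = 1) (hl : y l = 1)
    (hn : 2 ^ M ≤ n) : |K n y| ≤ 2 ^ (k + l + 2) / 2 ^ M := by
  have hn0 : 0 < n := lt_of_lt_of_le (Nat.pow_pos (n := M) (by norm_num)) hn
  have hB : n < 2 ^ n := Nat.lt_pow_self (by norm_num)
  have h1 : |DS n y| ≤ 2 ^ (k + l + 2) := abs_DS_coset hkl hk hl n n hB
  have hKDS : K n y = (1 / n) * DS n y := rfl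
  rw [hKDS, abs_mul, abs_of_nonneg (by positivity : (0 : ℝ) ≤ 1 / (n : ℝ))]
  have hnM : ((2 : ℝ) ^ M) ≤ (n : ℝ) := by exact_mod_cast hn
  have h2 : (1 : ℝ) / n ≤ 1 / 2 ^ M :=
    one_div_le_one_div_of_le (by positivity) hnM
  calc (1 / (n : ℝ)) * |DS n y| ≤ (1 / 2 ^ M) * 2 ^ (k + l + 2) :=
        mul_le_mul h2 h1 (abs_nonneg _) (by positivity)
    _ = 2 ^ (k + l + 2) / 2 ^ M := by ring

/-! ### Measure computations -/

instance : ContinuousAdd (ZMod 2) := ⟨continuous_of_discreteTopology⟩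

lemma measurableSet_cyl (n : ℕ) (x : G) : MeasurableSet (cyl n x) := by
  have h : cyl n x = ⋂ k ∈ Set.Iio n, (fun y : G => y k) ⁻¹' {x k} := by
    ext y
    simp [cyl]
  rw [h]
  refine MeasurableSet.biInter (Set.to_countable _) fun k _ => ?_
  exact ((continuous_apply k).isOpen_preimage _ (isOpen_discrete _)).measurableSet

lemma cyl_preimage (n : ℕ) (x : G) : cyl n x = (fun y : G => x + y) ⁻¹' (I₀ n) := by
  ext y
  simp only [cyl, I₀, Set.mem_preimage, Set.mem_setOf_eq, Pi.add_apply, Pi.zero_apply]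
  have hz : ∀ a b : ZMod 2, a + b = 0 ↔ b = a := by decide
  constructor
  · intro hy j hj
    rw [hz]
    exact hy j hj
  · intro hy j hj
    rw [← hz]
    exact hy j hj

instance : μG.IsAddLeftInvariant := by
  unfold μG
  infer_instance

lemma measure_cyl (n : ℕ) (x : G) : μG (cyl n x) = μG (I₀ n) := by
  rw [cyl_preimage]
  exact measure_preimage_add μG x (I₀ n)

lemma μG_univ : μG Set.univ = 1 := by
  have h := Measure.addHaarMeasure_self
    (K₀ := (⟨⟨Set.univ, isCompact_univ⟩, by simp⟩ : TopologicalSpace.PositiveCompacts G))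
  exact h

lemma I0_succ_eq (M : ℕ) : I₀ M = I₀ (M + 1) ∪ cyl (M + 1) (e M) := by
  ext y
  simp only [I₀, cyl, Set.mem_union, Set.mem_setOf_eq, Pi.zero_apply]
  constructor
  · intro h
    rcases zmod2_cases (y M) with h0 | h1
    · left
      intro j hj
      rcases (by omega : j < M ∨ j = M) with hj' | hj'
      · exact h j hj'
      · rw [hj']; exact h0
    · right
      intro j hj
      rcases (by omega : j < M ∨ j = M) with hj' | hj'
      · simp only [e]
        rw [if_neg (show ¬ j = M by omega), h j hj']
      · subst hj'
        simp only [e]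
        rw [if_pos trivial]
        exact h1
  · intro h j hj
    rcases h with h | h
    · exact h j (by omega)
    · rw [h j (by omega)]
      simp only [e]
      rw [if_neg (show ¬ j = M by omega)]

lemma I0_disj (M : ℕ) : Disjoint (I₀ (M + 1)) (cyl (M + 1) (e M)) := by
  rw [Set.disjoint_left]
  intro y h1 h2
  have a := h1 M (by omega)
  have b := h2 M (by omega)
  simp only [Pi.zero_apply] at a
  have hb : y M = 1 := by
    rw [b]; simp [e]
  rw [hb] at a
  exact (by decide : (1 : ZMod 2) ≠ 0) a

lemma measure_I0_mul (M : ℕ) : μG (I₀ M) * 2 ^ M = 1 := by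
  induction M with
  | zero =>
    have h : I₀ 0 = Set.univ := by
      ext y; simp [I₀, cyl]
    rw [h, μG_univ, pow_zero, mul_one]
  | succ M ih =>
    have hsum : μG (I₀ M) = μG (I₀ (M + 1)) + μG (cyl (M + 1) (e M)) := by
      rw [I0_succ_eq M]
      exact measure_union (I0_disj M) (measurableSet_cyl _ _)
    rw [measure_cyl] at hsum
    calc μG (I₀ (M + 1)) * 2 ^ (M + 1)
        = (μG (I₀ (M + 1)) + μG (I₀ (M + 1))) * 2 ^ M := by rw [pow_succ]; ring
      _ = μG (I₀ M) * 2 ^ M := by rw [← hsum]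
      _ = 1 := ih

lemma measure_I0 (M : ℕ) : μG (I₀ M) = 1 / 2 ^ M := by
  refine (ENNReal.eq_div_iff ?_ ?_).2 (by rw [mul_comm]; exact measure_I0_mul M)
  · exact pow_ne_zero M (by norm_num)
  · exact ENNReal.pow_ne_top (by norm_num)

end FejerAux

/-- `∫_{I_M} |K_n(x+t)| dμ(t) ≤ c 2^{k+l-2M}` for `n ≥ 2^M` and
`x ∈ I_{l+1}(e_k + e_l)`, `0 ≤ k < l < M`. -/
theorem fejer_integral_estimate :
    ∃ c : ℝ, 0 < c ∧ ∀ (M n k l : ℕ) (x : G),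
      2 ^ M ≤ n → k < l → l < M → x ∈ cyl (l + 1) (e k + e l) →
      (∫ t in I₀ M, |K n (x + t)| ∂μG) ≤ c * (2 : ℝ) ^ ((k : ℤ) + l - 2 * M) := by
  refine ⟨4, by norm_num, ?_⟩
  intro M n k l x hn hkl hlM hx
  have hy : ∀ t ∈ I₀ M, (x + t) k = 1 ∧ (x + t) l = 1 := by
    intro t ht
    have h1 : x k = (e k + e l) k := hx k (by omega)
    have h2 : x l = (e k + e l) l := hx l (by omega)
    have ht1 : t k = 0 := by
      have := ht k (by omega)
      simpa using this
    have ht2 : t l = 0 := by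
      have := ht l (by omega)
      simpa using this
    have hek : (e k + e l) k = 1 := by
      rw [Pi.add_apply]
      simp only [e]
      norm_num [(show ¬ k = l by omega), (show ¬ l = k by omega)]
    have hel : (e k + e l) l = 1 := by
      rw [Pi.add_apply]
      simp only [e]
      norm_num [(show ¬ k = l by omega), (show ¬ l = k by omega)]
    constructor
    · rw [Pi.add_apply, h1, hek, ht1, add_zero]
    · rw [Pi.add_apply, h2, hel, ht2, add_zero]
  have hbound : ∀ t ∈ I₀ M, ‖|K n (x + t)|‖ ≤ (2 : ℝ) ^ (k + l + 2) / 2 ^ M := by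
    intro t ht
    rw [Real.norm_eq_abs, abs_abs]
    exact abs_K_le hkl (hy t ht).1 (hy t ht).2 hn
  have hfin : μG (I₀ M) < ⊤ := by
    rw [measure_I0]
    exact ENNReal.div_lt_top (by norm_num) (pow_ne_zero M (by norm_num))
  have hmain :=
    norm_setIntegral_le_of_norm_le_const (μ := μG) hfin hbound
  have h0 : (∫ t in I₀ M, |K n (x + t)| ∂μG)
      ≤ ((2 : ℝ) ^ (k + l + 2) / 2 ^ M) * (μG (I₀ M)).toReal :=
    le_trans (le_abs_self _) (by rw [← Real.norm_eq_abs]; exact hmain)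
  have htr : (μG (I₀ M)).toReal = 1 / 2 ^ M := by
    rw [measure_I0]
    rw [ENNReal.toReal_div, ENNReal.toReal_pow]
    norm_num
  rw [htr] at h0
  refine le_trans h0 ?_
  have hz : (2 : ℝ) ^ ((k : ℤ) + l - 2 * M) = 2 ^ (k + l) / 2 ^ (2 * M) := by
    rw [show (k : ℤ) + l - 2 * M = ((k + l : ℕ) : ℤ) - ((2 * M : ℕ) : ℤ) by push_cast; ring,
      zpow_sub₀ (by norm_num : (2 : ℝ) ≠ 0), zpow_natCast, zpow_natCast]
  rw [hz]
  have hEq : (2 : ℝ) ^ (k + l + 2) / 2 ^ M * (1 / 2 ^ M) = 4 * (2 ^ (k + l) / 2 ^ (2 * M)) := by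
    have e1 : (2 : ℝ) ^ (k + l + 2) = 2 ^ (k + l) * 4 := by
      rw [pow_add]; norm_num
    have e2 : (2 : ℝ) ^ (2 * M) = 2 ^ M * 2 ^ M := by
      rw [two_mul, pow_add]
    rw [e1, e2]
    field_simp
  rw [hEq]
end
end

section
/- The complement of I_M in the dyadic group decomposes as the disjoint union Ḡ∖I_M = (⋃_{k=0}^{M−2} ⋃_{l=k+1}^{M−1} I_{l+1}(e_k + e_l)) ∪ (⋃_{k=0}^{M−1} I_M(e_k)). -/
open MeasureTheory Filter Topology ENNReal NNReal

noncomputable section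

/-- decomposition of the complement of `I_M`. -/
theorem complement_cylinder_decomposition (M : ℕ) :
    (I₀ M)ᶜ =
      (⋃ k, ⋃ l, ⋃ (_ : k < l ∧ l < M), cyl (l + 1) (e k + e l)) ∪
      (⋃ k, ⋃ (_ : k < M), cyl M (e k)) := by
  classical
  have one_of_ne : ∀ a : ZMod 2, a ≠ 0 → a = 1 := by decide
  ext y
  simp only [I₀, cyl, Set.mem_compl_iff, Set.mem_setOf_eq, Set.mem_union, Set.mem_iUnion,
    Pi.zero_apply, Pi.add_apply, e]
  constructor
  · intro h
    push_neg at h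
    obtain ⟨k0, hk0, hy0⟩ := h
    have hex : ∃ k, k < M ∧ y k ≠ 0 := ⟨k0, hk0, hy0⟩
    set k := Nat.find hex with hkdef
    obtain ⟨hkM, hyk⟩ := Nat.find_spec hex
    have hkmin : ∀ j, j < k → j < M → y j = 0 := by
      intro j hj hjM
      by_contra hne
      exact Nat.find_min hex hj ⟨hjM, hne⟩
    by_cases hl : ∃ l, (k < l ∧ l < M) ∧ y l ≠ 0
    · set l := Nat.find hl with hldef
      obtain ⟨⟨hkl, hlM⟩, hyl⟩ := Nat.find_spec hl
      have hlmin : ∀ j, j < l → k < j → j < M → y j = 0 := by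
        intro j hj hkj hjM
        by_contra hne
        exact Nat.find_min hl hj ⟨⟨hkj, hjM⟩, hne⟩
      left
      refine ⟨k, l, ⟨hkl, hlM⟩, ?_⟩
      intro j hj
      rcases eq_or_ne j k with rfl | hjk
      · simp [show k ≠ l from Nat.ne_of_lt hkl, show y k = 1 from one_of_ne _ hyk]
      · rcases eq_or_ne j l with rfl | hjl
        · simp [hjk, show y l = 1 from one_of_ne _ hyl]
        · have hjl' : j < l := lt_of_le_of_ne (Nat.lt_succ_iff.mp hj) hjl
          rcases lt_or_gt_of_ne hjk with hlt | hgt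
          · simp [hjk, hjl, hkmin j hlt (hjl'.trans hlM)]
          · simp [hjk, hjl, hlmin j hjl' hgt (hjl'.trans hlM)]
    · push_neg at hl
      right
      refine ⟨k, hkM, ?_⟩
      intro j hj
      rcases eq_or_ne j k with rfl | hjk
      · simp [show y k = 1 from one_of_ne _ hyk]
      · rcases lt_or_gt_of_ne hjk with hlt | hgt
        · simp [hjk, hkmin j hlt hj]
        · simp [hjk, hl j ⟨hgt, hj⟩]
  · rintro (⟨k, l, ⟨hkl, hlM⟩, hcy⟩ | ⟨k, hkM, hcy⟩) hall
    · have := hcy l (Nat.lt_succ_self l)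
      rw [hall l hlM] at this
      simp [Nat.ne_of_gt hkl] at this
    · have := hcy k hkM
      rw [hall k hkM] at this
      simp at this
end
end
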